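/- Let k : [0,1] → ℝ satisfy k > 0 on (0,1], k(0) = 0, be continuous and differentiable on (0,1] with x·k'(x) ≤ M·k(x) on (0,1] for some M ∈ (0,2), and fix R > 0. Then the function p(x) = ∫₀ˣ (y/k(y))·e^{R y²} dy is well-defined, finite, nonnegative, and nondecreasing on [0,1], with p(0) = 0. -/

import Mathlib

open Set MeasureTheory intervalIntegral

lemma key_lb (k k' : ℝ → ℝ) (M : ℝ)
    (hcont : ContinuousOn k (Set.Icc 0 1))
    (hder : ∀ x ∈ Set.Ioc (0:ℝ) 1, HasDerivAt k (k' x) x)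
    (hineq : ∀ x ∈ Set.Ioc (0:ℝ) 1, x * k' x ≤ M * k x) :
    ∀ y ∈ Set.Ioc (0:ℝ) 1, k 1 * y ^ M ≤ k y := by
  intro y hy
  set g : ℝ → ℝ := fun x => k x / x ^ M with hg
  have hanti : AntitoneOn g (Icc y 1) := by
    apply antitoneOn_of_deriv_nonpos (convex_Icc y 1)
    · apply ContinuousOn.div
      · exact hcont.mono (fun x hx => ⟨le_trans hy.1.le hx.1, hx.2⟩)
      · exact ContinuousOn.rpow_const continuousOn_id (fun x hx => Or.inl (lt_of_lt_of_le hy.1 hx.1).ne')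
      · intro x hx
        exact (Real.rpow_pos_of_pos (lt_of_lt_of_le hy.1 hx.1) M).ne'
    · intro x hx
      rw [interior_Icc] at hx
      have hx0 : (0:ℝ) < x := lt_trans hy.1 hx.1
      have hxm : x ∈ Set.Ioc (0:ℝ) 1 := ⟨hx0, hx.2.le⟩
      have h1 : HasDerivAt (fun x : ℝ => x ^ M) (M * x ^ (M - 1)) x :=
        Real.hasDerivAt_rpow_const (Or.inl hx0.ne')
      exact ((hder x hxm).div h1 (Real.rpow_pos_of_pos hx0 M).ne').differentiableAt.differentiableWithinAt
    · intro x hx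
      rw [interior_Icc] at hx
      have hx0 : (0:ℝ) < x := lt_trans hy.1 hx.1
      have hxm : x ∈ Set.Ioc (0:ℝ) 1 := ⟨hx0, hx.2.le⟩
      have h1 : HasDerivAt (fun x : ℝ => x ^ M) (M * x ^ (M - 1)) x :=
        Real.hasDerivAt_rpow_const (Or.inl hx0.ne')
      have hd := (hder x hxm).div h1 (Real.rpow_pos_of_pos hx0 M).ne'
      rw [show deriv g x = _ from hd.deriv]
      apply div_nonpos_of_nonpos_of_nonneg _ (sq_nonneg _)
      have hfac : k' x * x ^ M - k x * (M * x ^ (M - 1)) =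
          x ^ (M - 1) * (x * k' x - M * k x) := by
        have hxM : x ^ M = x ^ (M - 1) * x := by
          rw [← Real.rpow_add_one hx0.ne' (M - 1)]; ring_nf
        rw [hxM]; ring
      rw [hfac]
      exact mul_nonpos_of_nonneg_of_nonpos (Real.rpow_pos_of_pos hx0 _).le
        (sub_nonpos.mpr (hineq x hxm))
  have h := hanti ⟨le_refl y, hy.2⟩ ⟨hy.2, le_refl 1⟩ hy.2
  simp only [hg, Real.one_rpow, div_one] at h
  rwa [le_div_iff₀ (Real.rpow_pos_of_pos hy.1 M)] at h

theorem stmt_5 (k k' : ℝ → ℝ) (M R : ℝ) (hM : M ∈ Set.Ioo (0:ℝ) 2) (hR : 0 < R)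
    (hcont : ContinuousOn k (Set.Icc 0 1))
    (hder : ∀ x ∈ Set.Ioc (0:ℝ) 1, HasDerivAt k (k' x) x)
    (hpos : ∀ x ∈ Set.Ioc (0:ℝ) 1, 0 < k x)
    (hk0 : k 0 = 0)
    (hineq : ∀ x ∈ Set.Ioc (0:ℝ) 1, x * k' x ≤ M * k x) :
    MeasureTheory.IntegrableOn (fun y => y / k y * Real.exp (R * y ^ 2))
        (Set.Ioo 0 1) MeasureTheory.volume ∧
    (∀ x ∈ Set.Icc (0:ℝ) 1,
      0 ≤ ∫ y in (0:ℝ)..x, y / k y * Real.exp (R * y ^ 2)) ∧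
    MonotoneOn (fun x => ∫ y in (0:ℝ)..x, y / k y * Real.exp (R * y ^ 2))
      (Set.Icc 0 1) ∧
    (∫ y in (0:ℝ)..(0:ℝ), y / k y * Real.exp (R * y ^ 2)) = 0 := by
  have hk1 : 0 < k 1 := hpos 1 ⟨zero_lt_one, le_refl 1⟩
  have hlb := key_lb k k' M hcont hder hineq
  set f : ℝ → ℝ := fun y => y / k y * Real.exp (R * y ^ 2) with hf
  -- nonnegativity of the integrand on [0,1]
  have hfnn : ∀ y ∈ Icc (0:ℝ) 1, 0 ≤ f y := by
    intro y hy
    rcases eq_or_lt_of_le hy.1 with h | h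
    · simp [hf, ← h]
    · exact mul_nonneg (div_nonneg hy.1 (hpos y ⟨h, hy.2⟩).le) (Real.exp_nonneg _)
  -- integrability
  have hint : IntegrableOn f (Set.Ioo 0 1) volume := by
    have hg : IntegrableOn (fun y : ℝ => Real.exp R / k 1 * y ^ (1 - M)) (Set.Ioo 0 1) volume := by
      have : IntervalIntegrable (fun y : ℝ => y ^ (1 - M)) volume 0 1 :=
        intervalIntegrable_rpow' (by linarith [hM.2])
      have h2 : IntegrableOn (fun y : ℝ => y ^ (1 - M)) (Set.Ioc 0 1) volume := by
        rw [← intervalIntegrable_iff_integrableOn_Ioc_of_le zero_le_one]; exact this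
      exact ((Iff.mp integrableOn_Ioc_iff_integrableOn_Ioo h2).const_mul _)
    apply hg.mono' _ _
    · apply ContinuousOn.aestronglyMeasurable _ measurableSet_Ioo
      apply ContinuousOn.mul
      · exact ContinuousOn.div continuousOn_id
          (hcont.mono (fun x hx => ⟨hx.1.le, hx.2.le⟩))
          (fun x hx => (hpos x ⟨hx.1, hx.2.le⟩).ne')
      · exact (Real.continuous_exp.comp (by continuity)).continuousOn
    · filter_upwards [ae_restrict_mem measurableSet_Ioo] with y hy
      have hy0 : 0 < y := hy.1
      have hky : 0 < k y := hpos y ⟨hy0, hy.2.le⟩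
      have hkb : k 1 * y ^ M ≤ k y := hlb y ⟨hy0, hy.2.le⟩
      have hrp : 0 < k 1 * y ^ M := mul_pos hk1 (Real.rpow_pos_of_pos hy0 M)
      rw [Real.norm_eq_abs, abs_of_nonneg (hfnn y ⟨hy0.le, hy.2.le⟩)]
      have h1 : y / k y ≤ y / (k 1 * y ^ M) := by
        apply div_le_div_of_nonneg_left hy0.le hrp hkb
      have h2 : Real.exp (R * y ^ 2) ≤ Real.exp R := by
        apply Real.exp_le_exp.mpr
        have hsq : y ^ 2 ≤ 1 := by nlinarith [mul_nonneg hy0.le (sub_nonneg.mpr hy.2.le), hy.2]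
        nlinarith
      have h3 : f y ≤ y / (k 1 * y ^ M) * Real.exp R :=
        mul_le_mul h1 h2 (Real.exp_nonneg _)
          (div_nonneg hy0.le hrp.le)
      calc f y ≤ y / (k 1 * y ^ M) * Real.exp R := h3
        _ = Real.exp R / k 1 * y ^ (1 - M) := by
            rw [Real.rpow_sub hy0, Real.rpow_one]
            field_simp
  have hII : ∀ a b : ℝ, 0 ≤ a → a ≤ b → b ≤ 1 → IntervalIntegrable f volume a b := by
    intro a b ha hab hb
    rw [intervalIntegrable_iff_integrableOn_Ioc_of_le hab]
    apply (Iff.mpr integrableOn_Ioc_iff_integrableOn_Ioo hint).mono_set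
    exact Ioc_subset_Ioc ha hb
  refine ⟨hint, ?_, ?_, integral_same⟩
  · intro x hx
    exact integral_nonneg hx.1 (fun u hu => hfnn u ⟨hu.1, le_trans hu.2 hx.2⟩)
  · intro a ha b hb hab
    have h1 : IntervalIntegrable f volume 0 a := hII 0 a (le_refl 0) ha.1 ha.2
    have h2 : IntervalIntegrable f volume a b := hII a b ha.1 hab hb.2
    have := integral_add_adjacent_intervals h1 h2
    show (∫ y in (0:ℝ)..a, f y) ≤ ∫ y in (0:ℝ)..b, f y
    rw [← this]
    have : 0 ≤ ∫ y in a..b, f y :=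
      integral_nonneg hab (fun u hu => hfnn u ⟨le_trans ha.1 hu.1, le_trans hu.2 hb.2⟩)
    linarith
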